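/- For a category C, an object W of Cat that is not the initial (empty) category satisfies the following equivalent conditions: (i) the unique functor W → 1 is an equivalence; (ii) the projection π : W × W → W is an equivalence; (iii) the identity functor on W is naturally isomorphic to a constant functor; (iv) any two functors f, g : X → W are naturally isomorphic (W is pseudo-preterminal). -/

import Mathlib

/-!
For an object `W` of `Cat` that is not the initial (empty) category, the following are
equivalent: (i) the unique functor `W ⥤ 1` is an equivalence; (ii) the projection
`W × W ⥤ W` is an equivalence; (iii) the identity functor of `W` is naturally isomorphic
to a constant functor; (iv) any two functors `f g : X ⥤ W` are naturally isomorphic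
(`W` is pseudo-preterminal).
-/

universe v u

open CategoryTheory CategoryTheory.Limits

section Aux

variable (W : Type u) [Category.{v} W]

lemma aux_C_to_A (c : W) (η : 𝟭 W ≅ (Functor.const W).obj c) :
    (Functor.star W).IsEquivalence := by
  let e : CategoryTheory.Equivalence W (Discrete PUnit) :=
    { functor := Functor.star W
      inverse := (Functor.const _).obj c
      unitIso := NatIso.ofComponents (fun x => η.app x) (by
        intro x y f
        have := η.hom.naturality f
        simpa using this)
      counitIso := Functor.punitExt _ _ }
  exact e.isEquivalence_functor

lemma aux_A_to_D (h : (Functor.star W).IsEquivalence)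
    (X : Type u) [Category.{v} X] (f g : X ⥤ W) : Nonempty (f ≅ g) := by
  let e := (Functor.star W).asEquivalence
  have key : ∀ k : X ⥤ W, k ≅ (k ⋙ Functor.star W) ⋙ e.inverse := fun k =>
    k.rightUnitor.symm ≪≫ Functor.isoWhiskerLeft k e.unitIso ≪≫ (Functor.associator _ _ _).symm
  exact ⟨key f ≪≫ Functor.isoWhiskerRight (Functor.punitExt _ _) e.inverse ≪≫ (key g).symm⟩

lemma aux_C_to_B (c : W) (η : 𝟭 W ≅ (Functor.const W).obj c) :
    (CategoryTheory.Prod.fst W W).IsEquivalence := by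
  let e : CategoryTheory.Equivalence (W × W) W :=
    { functor := CategoryTheory.Prod.fst W W
      inverse := Functor.prod' (𝟭 W) ((Functor.const W).obj c)
      unitIso := NatIso.ofComponents
        (fun x => (Iso.refl x.1).prod (η.app x.2)) (by
          intro x y f
          have := η.hom.naturality f.2
          ext
          · simp
          · simpa using this)
      counitIso := NatIso.ofComponents (fun x => Iso.refl x) (by intros; simp) }
  exact e.isEquivalence_functor

lemma aux_B_to_D (h : (CategoryTheory.Prod.fst W W).IsEquivalence)
    (X : Type u) [Category.{v} X] (f g : X ⥤ W) : Nonempty (f ≅ g) := by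
  let e := (CategoryTheory.Prod.fst W W).asEquivalence
  have key : ∀ k : X ⥤ W,
      f ⋙ (e.inverse ⋙ CategoryTheory.Prod.snd W W) ≅ k := by
    intro k
    calc f ⋙ (e.inverse ⋙ CategoryTheory.Prod.snd W W)
        = ((Functor.prod' f k ⋙ CategoryTheory.Prod.fst W W) ⋙ e.inverse) ⋙
            CategoryTheory.Prod.snd W W := rfl
      _ ≅ (Functor.prod' f k ⋙ 𝟭 (W × W)) ⋙ CategoryTheory.Prod.snd W W :=
          Functor.isoWhiskerRight ((Functor.associator _ _ _) ≪≫
            Functor.isoWhiskerLeft (Functor.prod' f k) e.unitIso.symm) _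
      _ ≅ k := Iso.refl _
  exact ⟨(key f).symm ≪≫ key g⟩

end Aux

theorem pseudo_preterminal_objects_in_Cat
    (W : Type u) [Category.{v} W] (hW : Nonempty W) :
    ((Functor.star W).IsEquivalence ↔ (CategoryTheory.Prod.fst W W).IsEquivalence) ∧
    ((CategoryTheory.Prod.fst W W).IsEquivalence ↔
      ∃ c : W, Nonempty (𝟭 W ≅ (Functor.const W).obj c)) ∧
    ((∃ c : W, Nonempty (𝟭 W ≅ (Functor.const W).obj c)) ↔
      ∀ (X : Type u) [Category.{v} X] (f g : X ⥤ W), Nonempty (f ≅ g)) := by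
  have hDC : (∀ (X : Type u) [Category.{v} X] (f g : X ⥤ W), Nonempty (f ≅ g)) →
      ∃ c : W, Nonempty (𝟭 W ≅ (Functor.const W).obj c) := fun h =>
    ⟨hW.some, h W (𝟭 W) ((Functor.const W).obj hW.some)⟩
  have hCA : (∃ c : W, Nonempty (𝟭 W ≅ (Functor.const W).obj c)) →
      (Functor.star W).IsEquivalence := fun ⟨c, ⟨η⟩⟩ => aux_C_to_A W c η
  have hCB : (∃ c : W, Nonempty (𝟭 W ≅ (Functor.const W).obj c)) →
      (CategoryTheory.Prod.fst W W).IsEquivalence := fun ⟨c, ⟨η⟩⟩ => aux_C_to_B W c η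
  refine ⟨⟨fun h => hCB (hDC (aux_A_to_D W h)), fun h => hCA (hDC (aux_B_to_D W h))⟩,
    ⟨fun h => hDC (aux_B_to_D W h), hCB⟩,
    ⟨fun h => aux_A_to_D W (hCA h), hDC⟩⟩
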